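/- With M = I − μ Σ_x̃⁻¹ where Σ_x̃ is symmetric positive definite with spectral norm ‖M‖ < 1, the fixed-point covariance Σ* = (I − M²)⁻¹(σ² M² + (2μ − σ²) I) can be rewritten as Σ* = −σ² I + Σ_x̃ (I − (μ/2) Σ_x̃⁻¹)⁻¹, provided I − (μ/2) Σ_x̃⁻¹ is invertible. -/

import Mathlib

open scoped Matrix.Norms.L2Operator

/-- Rewriting of the fixed-point covariance:
(I−M²)⁻¹(σ²M² + (2μ−σ²)I) = −σ²I + Σ_x̃(I − (μ/2)Σ_x̃⁻¹)⁻¹. -/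
theorem fixed_point_covariance_rewrite (k : ℕ)
    (Sxt : Matrix (Fin k) (Fin k) ℝ) (hS : Sxt.PosDef)
    (μ σsq : ℝ) (hμ : 0 < μ) (hσ : 0 < σsq)
    (M : Matrix (Fin k) (Fin k) ℝ) (hM : M = 1 - μ • Sxt⁻¹)
    (hnorm : ‖M‖ < 1)
    (hinv : IsUnit (1 - (μ / 2) • Sxt⁻¹)) :
    (1 - M ^ 2)⁻¹ * (σsq • M ^ 2 + (2 * μ - σsq) • 1)
      = (-σsq) • 1 + Sxt * (1 - (μ / 2) • Sxt⁻¹)⁻¹ := by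
  set A := Sxt⁻¹ with hA
  set C := (1 : Matrix (Fin k) (Fin k) ℝ) - (μ / 2) • A with hC
  have hdS : IsUnit Sxt.det := isUnit_iff_ne_zero.mpr hS.det_pos.ne'
  have hAS : A * Sxt = 1 := Matrix.nonsing_inv_mul _ hdS
  have hSA : Sxt * A = 1 := Matrix.mul_nonsing_inv _ hdS
  have hdC : IsUnit C.det := (Matrix.isUnit_iff_isUnit_det _).mp hinv
  have hCC : C * C⁻¹ = 1 := Matrix.mul_nonsing_inv _ hdC
  have hCS : C * Sxt = Sxt * C := by
    simp [hC, Matrix.sub_mul, Matrix.mul_sub, Matrix.smul_mul, Matrix.mul_smul, hAS, hSA]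
  have key : 1 - M ^ 2 = (2 * μ) • (A * C) := by
    subst hM
    rw [sq]
    simp only [hC, Matrix.mul_sub, Matrix.sub_mul, Matrix.mul_smul, Matrix.smul_mul,
      mul_one, one_mul, smul_smul]
    module
  have keymul : (1 - M ^ 2) * ((-σsq) • 1 + Sxt * C⁻¹)
      = σsq • M ^ 2 + (2 * μ - σsq) • 1 := by
    rw [Matrix.mul_add, key]
    have h1 : ((2 * μ) • (A * C)) * (Sxt * C⁻¹) = (2 * μ) • (1 : Matrix (Fin k) (Fin k) ℝ) := by
      rw [Matrix.smul_mul, mul_assoc, ← mul_assoc C, hCS, mul_assoc, hCC, mul_one, hAS]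
    rw [h1, ← key]
    simp only [Matrix.mul_smul, mul_one]
    module
  have hU : IsUnit (1 - M ^ 2).det := by
    rw [key, Matrix.det_smul, Matrix.det_mul]
    exact (IsUnit.pow _ (isUnit_iff_ne_zero.mpr (by positivity))).mul
      (((Matrix.isUnit_nonsing_inv_det _ hdS)).mul hdC)
  calc (1 - M ^ 2)⁻¹ * (σsq • M ^ 2 + (2 * μ - σsq) • 1)
      = (1 - M ^ 2)⁻¹ * ((1 - M ^ 2) * ((-σsq) • 1 + Sxt * C⁻¹)) := by rw [keymul]
    _ = (-σsq) • 1 + Sxt * C⁻¹ := by rw [← mul_assoc, Matrix.nonsing_inv_mul _ hU, one_mul]
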